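/- Under the setting of the REG method with constant stepsize η_t = 1/L and μ > 0, letting z* be the unique saddle point of F on X × Y, the iterates satisfy ‖z_T - z*‖² ≤ (1 + μ/L)^{-T} ‖z_0 - z*‖² for all T ≥ 1. -/

import Mathlib

open scoped RealInnerProductSpace

set_option maxHeartbeats 1000000

open scoped RealInnerProductSpace

lemma sq_expand_aux {E : Type*} [NormedAddCommGroup E] [InnerProductSpace ℝ E]
    (u w p : E) (l : ℝ) :
    ‖u + l • w - p‖ ^ 2 = ‖u - p‖ ^ 2 + 2 * l * ⟪u - p, w⟫ + l ^ 2 * ‖w‖ ^ 2 := by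
  have h : u + l • w - p = (u - p) + l • w := by abel
  rw [h, norm_add_sq_real, real_inner_smul_right, norm_smul]
  simp [mul_pow, sq_abs]
  ring

lemma strong_min_aux {E : Type*} [NormedAddCommGroup E] [InnerProductSpace ℝ E]
    {X : Set E} (hX : Convex ℝ X)
    (a p q : E) (α β : ℝ) (hα : 0 ≤ α) (hβ : 0 ≤ β) (u : E) (hu : u ∈ X)
    (hmin : ∀ x' ∈ X, ⟪a, u⟫ + α * ‖u - p‖ ^ 2 + β * ‖u - q‖ ^ 2
      ≤ ⟪a, x'⟫ + α * ‖x' - p‖ ^ 2 + β * ‖x' - q‖ ^ 2) :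
    ∀ x' ∈ X, ⟪a, u⟫ + α * ‖u - p‖ ^ 2 + β * ‖u - q‖ ^ 2 + (α + β) * ‖x' - u‖ ^ 2
      ≤ ⟪a, x'⟫ + α * ‖x' - p‖ ^ 2 + β * ‖x' - q‖ ^ 2 := by
  intro x' hx'
  set w := x' - u with hw
  set D := ‖w‖ ^ 2 with hD
  have hD0 : 0 ≤ D := by positivity
  have key : ∀ l : ℝ, 0 < l → l ≤ 1 →
      (α + β) * (1 - l) * D ≤
        (⟪a, x'⟫ + α * ‖x' - p‖ ^ 2 + β * ‖x' - q‖ ^ 2)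
        - (⟪a, u⟫ + α * ‖u - p‖ ^ 2 + β * ‖u - q‖ ^ 2) := by
    intro l hl0 hl1
    have hmem : u + l • w ∈ X := by
      have : u + l • w = (1 - l) • u + l • x' := by
        rw [hw]; rw [smul_sub]; module
      rw [this]
      exact hX hu hx' (by linarith) (le_of_lt hl0) (by ring)
    have h1 := hmin (u + l • w) hmem
    have e1 : ‖u + l • w - p‖ ^ 2 = ‖u - p‖ ^ 2 + 2 * l * ⟪u - p, w⟫ + l ^ 2 * D :=
      sq_expand_aux u w p l
    have e2 : ‖u + l • w - q‖ ^ 2 = ‖u - q‖ ^ 2 + 2 * l * ⟪u - q, w⟫ + l ^ 2 * D :=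
      sq_expand_aux u w q l
    have e3 : ‖x' - p‖ ^ 2 = ‖u - p‖ ^ 2 + 2 * 1 * ⟪u - p, w⟫ + 1 ^ 2 * D := by
      have := sq_expand_aux u w p 1
      simpa [hw] using this
    have e4 : ‖x' - q‖ ^ 2 = ‖u - q‖ ^ 2 + 2 * 1 * ⟪u - q, w⟫ + 1 ^ 2 * D := by
      have := sq_expand_aux u w q 1
      simpa [hw] using this
    have e5 : ⟪a, u + l • w⟫ = ⟪a, u⟫ + l * ⟪a, w⟫ := by
      rw [inner_add_right, real_inner_smul_right]
    have e6 : ⟪a, x'⟫ = ⟪a, u⟫ + ⟪a, w⟫ := by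
      have : x' = u + w := by rw [hw]; abel
      rw [this, inner_add_right]
    rw [e1, e2, e5] at h1
    rw [e3, e4, e6]
    nlinarith [mul_pos hl0 hl0, sq_nonneg l, mul_le_mul_of_nonneg_left h1 (le_of_lt hl0)]
  have main : (α + β) * D ≤
      (⟪a, x'⟫ + α * ‖x' - p‖ ^ 2 + β * ‖x' - q‖ ^ 2)
      - (⟪a, u⟫ + α * ‖u - p‖ ^ 2 + β * ‖u - q‖ ^ 2) := by
    refine le_of_forall_pos_le_add ?_
    intro ε hε
    rcases le_or_gt ((α + β) * D) ε with h | h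
    · have := key 1 one_pos le_rfl
      linarith
    · have hcD : 0 < (α + β) * D := lt_trans hε h
      set l : ℝ := ε / ((α + β) * D) with hl
      have hl0 : 0 < l := div_pos hε hcD
      have hl1 : l ≤ 1 := by
        rw [hl, div_le_one hcD]; linarith
      have := key l hl0 hl1
      have hld : (α + β) * l * D = ε := by
        rw [hl]; field_simp [hcD.ne']; exact div_self hcD.ne'
      nlinarith
  linarith [main]


/-- Linear convergence of the regularized extragradient (REG) method with
constant stepsize `η = 1/L` for a smooth, `μ`-strongly-convex-strongly-concave
saddle point problem.  The product space `Z = X × Y` is handled componentwise,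
with `‖z - z'‖² = ‖x - x'‖² + ‖y - y'‖²`. -/
theorem reg_linear_convergence
    {E F : Type*} [NormedAddCommGroup E] [InnerProductSpace ℝ E]
    [NormedAddCommGroup F] [InnerProductSpace ℝ F]
    (X : Set E) (Y : Set F) (hXc : Convex ℝ X) (hYc : Convex ℝ Y)
    (hXcp : IsCompact X) (hYcp : IsCompact Y)
    (Fn : E → F → ℝ) (Gx : E → F → E) (Gy : E → F → F)
    (μ L : ℝ) (hμ : 0 < μ) (hL : 0 < L)
    -- μ-strong convexity in x:
    (hscx : ∀ x₁ ∈ X, ∀ x₂ ∈ X, ∀ y ∈ Y,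
      μ / 2 * ‖x₁ - x₂‖ ^ 2 ≤ Fn x₁ y - Fn x₂ y - ⟪Gx x₂ y, x₁ - x₂⟫)
    -- μ-strong concavity in y:
    (hscy : ∀ x ∈ X, ∀ y₁ ∈ Y, ∀ y₂ ∈ Y,
      Fn x y₁ - Fn x y₂ - ⟪Gy x y₂, y₁ - y₂⟫ ≤ -(μ / 2) * ‖y₁ - y₂‖ ^ 2)
    -- L-Lipschitz operator G = (Gx, -Gy) (squared form of the product norm):
    (hlip : ∀ x ∈ X, ∀ y ∈ Y, ∀ x' ∈ X, ∀ y' ∈ Y,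
      ‖Gx x y - Gx x' y'‖ ^ 2 + ‖Gy x y - Gy x' y'‖ ^ 2
        ≤ L ^ 2 * (‖x - x'‖ ^ 2 + ‖y - y'‖ ^ 2))
    -- unique saddle point z* = (x*, y*):
    (xstar : E) (ystar : F) (hxs : xstar ∈ X) (hys : ystar ∈ Y)
    (hsaddle : ∀ x ∈ X, ∀ y ∈ Y, Fn xstar y ≤ Fn xstar ystar ∧
      Fn xstar ystar ≤ Fn x ystar)
    -- iterates z_t = (x_t, y_t), ẑ_t = (x̂_t, ŷ_t), stepsize η = 1/L:
    (x : ℕ → E) (y : ℕ → F) (xh : ℕ → E) (yh : ℕ → F)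
    (hx : ∀ t, x t ∈ X) (hy : ∀ t, y t ∈ Y)
    (hxh : ∀ t, xh t ∈ X) (hyh : ∀ t, yh t ∈ Y)
    -- ẑ_t minimizes (1/L)⟨G(z_t), z⟩ + (1/2)‖z - z_t‖² over Z:
    (hhatmin : ∀ t, ∀ x' ∈ X, ∀ y' ∈ Y,
      (1 / L) * (⟪Gx (x t) (y t), xh t⟫ + ⟪-Gy (x t) (y t), yh t⟫)
          + 1 / 2 * (‖xh t - x t‖ ^ 2 + ‖yh t - y t‖ ^ 2)
        ≤ (1 / L) * (⟪Gx (x t) (y t), x'⟫ + ⟪-Gy (x t) (y t), y'⟫)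
          + 1 / 2 * (‖x' - x t‖ ^ 2 + ‖y' - y t‖ ^ 2))
    -- z_{t+1} minimizes (1/L)[⟨G(ẑ_t), z⟩ + (μ/2)‖z - ẑ_t‖²] + (1/2)‖z - z_t‖²:
    (hnmin : ∀ t, ∀ x' ∈ X, ∀ y' ∈ Y,
      (1 / L) * (⟪Gx (xh t) (yh t), x (t + 1)⟫ + ⟪-Gy (xh t) (yh t), y (t + 1)⟫
            + μ / 2 * (‖x (t + 1) - xh t‖ ^ 2 + ‖y (t + 1) - yh t‖ ^ 2))
          + 1 / 2 * (‖x (t + 1) - x t‖ ^ 2 + ‖y (t + 1) - y t‖ ^ 2)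
        ≤ (1 / L) * (⟪Gx (xh t) (yh t), x'⟫ + ⟪-Gy (xh t) (yh t), y'⟫
            + μ / 2 * (‖x' - xh t‖ ^ 2 + ‖y' - yh t‖ ^ 2))
          + 1 / 2 * (‖x' - x t‖ ^ 2 + ‖y' - y t‖ ^ 2)) :
    ∀ T : ℕ, 1 ≤ T →
      ‖x T - xstar‖ ^ 2 + ‖y T - ystar‖ ^ 2
        ≤ ((1 + μ / L) ^ T)⁻¹ * (‖x 0 - xstar‖ ^ 2 + ‖y 0 - ystar‖ ^ 2) := by
  
  have hη : (0:ℝ) < 1 / L := by positivity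
  -- one-step contraction
  have step : ∀ t : ℕ, (1 + μ / L) * (‖x (t+1) - xstar‖ ^ 2 + ‖y (t+1) - ystar‖ ^ 2)
      ≤ ‖x t - xstar‖ ^ 2 + ‖y t - ystar‖ ^ 2 := by
    intro t
    set a1 := x t
    set a2 := y t
    set h1 := xh t
    set h2 := yh t
    set n1 := x (t+1)
    set n2 := y (t+1)
    set gxh := Gx h1 h2
    set gyh := Gy h1 h2
    set gxa := Gx a1 a2
    set gya := Gy a1 a2
    -- per-coordinate minimality for the z_{t+1} step
    have minBx : ∀ x' ∈ X,
        ⟪(1/L) • gxh, n1⟫ + (1/L * (μ/2)) * ‖n1 - h1‖ ^ 2 + (1/2 : ℝ) * ‖n1 - a1‖ ^ 2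
        ≤ ⟪(1/L) • gxh, x'⟫ + (1/L * (μ/2)) * ‖x' - h1‖ ^ 2 + (1/2 : ℝ) * ‖x' - a1‖ ^ 2 := by
      intro x' hx'
      have h := hnmin t x' hx' n2 (hy (t+1))
      simp only [real_inner_smul_left]
      linarith [h]
    have minBy : ∀ y' ∈ Y,
        ⟪(1/L) • (-gyh), n2⟫ + (1/L * (μ/2)) * ‖n2 - h2‖ ^ 2 + (1/2 : ℝ) * ‖n2 - a2‖ ^ 2
        ≤ ⟪(1/L) • (-gyh), y'⟫ + (1/L * (μ/2)) * ‖y' - h2‖ ^ 2 + (1/2 : ℝ) * ‖y' - a2‖ ^ 2 := by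
      intro y' hy'
      have h := hnmin t n1 (hx (t+1)) y' hy'
      simp only [real_inner_smul_left]
      linarith [h]
    have minAx : ∀ x' ∈ X,
        ⟪(1/L) • gxa, h1⟫ + (0:ℝ) * ‖h1 - a1‖ ^ 2 + (1/2 : ℝ) * ‖h1 - a1‖ ^ 2
        ≤ ⟪(1/L) • gxa, x'⟫ + (0:ℝ) * ‖x' - a1‖ ^ 2 + (1/2 : ℝ) * ‖x' - a1‖ ^ 2 := by
      intro x' hx'
      have h := hhatmin t x' hx' h2 (hyh t)
      simp only [real_inner_smul_left]
      linarith [h]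
    have minAy : ∀ y' ∈ Y,
        ⟪(1/L) • (-gya), h2⟫ + (0:ℝ) * ‖h2 - a2‖ ^ 2 + (1/2 : ℝ) * ‖h2 - a2‖ ^ 2
        ≤ ⟪(1/L) • (-gya), y'⟫ + (0:ℝ) * ‖y' - a2‖ ^ 2 + (1/2 : ℝ) * ‖y' - a2‖ ^ 2 := by
      intro y' hy'
      have h := hhatmin t h1 (hxh t) y' hy'
      simp only [real_inner_smul_left]
      linarith [h]
    have hαB : (0:ℝ) ≤ 1/L * (μ/2) := by positivity
    have hβ : (0:ℝ) ≤ 1/2 := by norm_num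
    have Bx := strong_min_aux hXc ((1/L) • gxh) h1 a1 _ _ hαB hβ n1 (hx (t+1)) minBx
      xstar hxs
    have By := strong_min_aux hYc ((1/L) • (-gyh)) h2 a2 _ _ hαB hβ n2 (hy (t+1)) minBy
      ystar hys
    have Ax := strong_min_aux hXc ((1/L) • gxa) a1 a1 _ _ le_rfl hβ h1 (hxh t) minAx
      n1 (hx (t+1))
    have Ay := strong_min_aux hYc ((1/L) • (-gya)) a2 a2 _ _ le_rfl hβ h2 (hyh t) minAy
      n2 (hy (t+1))
    simp only [real_inner_smul_left, inner_neg_left] at Bx By Ax Ay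
    -- Cauchy–Schwarz / Lipschitz bound
    have c1 : ⟪gxh - gxa, h1 - n1⟫ ≤ ‖gxh - gxa‖ * ‖h1 - n1‖ := real_inner_le_norm _ _
    have c2 : ⟪gya - gyh, h2 - n2⟫ ≤ ‖gyh - gya‖ * ‖h2 - n2‖ := by
      rw [show ‖gyh - gya‖ = ‖gya - gyh‖ from norm_sub_rev _ _]
      exact real_inner_le_norm _ _
    have lip := hlip h1 (hxh t) h2 (hyh t) a1 (hx t) a2 (hy t)
    have hlp : (1/L)^2 * ‖gxh - gxa‖ ^ 2 + (1/L)^2 * ‖gyh - gya‖ ^ 2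
        ≤ ‖h1 - a1‖ ^ 2 + ‖h2 - a2‖ ^ 2 := by
      have e : (1/L)^2 * (L^2 * (‖h1 - a1‖ ^ 2 + ‖h2 - a2‖ ^ 2))
          = ‖h1 - a1‖ ^ 2 + ‖h2 - a2‖ ^ 2 := by
        field_simp
      have h' := mul_le_mul_of_nonneg_left lip (sq_nonneg (1/L))
      rw [e] at h'
      linarith
    have cs : (1/L) * ⟪gxh - gxa, h1 - n1⟫ + (1/L) * ⟪gya - gyh, h2 - n2⟫
        ≤ 1/2 * (‖h1 - a1‖ ^ 2 + ‖h2 - a2‖ ^ 2)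
          + 1/2 * (‖h1 - n1‖ ^ 2 + ‖h2 - n2‖ ^ 2) := by
      have d1 : (1/L) * (‖gxh - gxa‖ * ‖h1 - n1‖)
          ≤ (1/L)^2 * ‖gxh - gxa‖ ^ 2 / 2 + ‖h1 - n1‖ ^ 2 / 2 := by
        nlinarith [sq_nonneg ((1/L) * ‖gxh - gxa‖ - ‖h1 - n1‖)]
      have d2 : (1/L) * (‖gyh - gya‖ * ‖h2 - n2‖)
          ≤ (1/L)^2 * ‖gyh - gya‖ ^ 2 / 2 + ‖h2 - n2‖ ^ 2 / 2 := by
        nlinarith [sq_nonneg ((1/L) * ‖gyh - gya‖ - ‖h2 - n2‖)]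
      have m1 := mul_le_mul_of_nonneg_left c1 hη.le
      have m2 := mul_le_mul_of_nonneg_left c2 hη.le
      nlinarith [m1, m2, d1, d2, hlp]
    -- expand inner products
    have ex1 : ⟪gxh - gxa, h1 - n1⟫
        = ⟪gxh, h1⟫ - ⟪gxh, n1⟫ - ⟪gxa, h1⟫ + ⟪gxa, n1⟫ := by
      simp only [inner_sub_left, inner_sub_right]; ring
    have ex2 : ⟪gya - gyh, h2 - n2⟫
        = ⟪gya, h2⟫ - ⟪gya, n2⟫ - ⟪gyh, h2⟫ + ⟪gyh, n2⟫ := by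
      simp only [inner_sub_left, inner_sub_right]; ring
    rw [ex1] at cs
    rw [ex2] at cs
    -- strong convexity / concavity at the saddle point
    have scx := hscx xstar hxs h1 (hxh t) h2 (hyh t)
    have scy := hscy h1 (hxh t) ystar hys h2 (hyh t)
    have ex3 : ⟪gxh, xstar - h1⟫ = ⟪gxh, xstar⟫ - ⟪gxh, h1⟫ := inner_sub_right _ _ _
    have ex4 : ⟪gyh, ystar - h2⟫ = ⟪gyh, ystar⟫ - ⟪gyh, h2⟫ := inner_sub_right _ _ _
    rw [ex3] at scx
    rw [ex4] at scy
    have scx' := mul_le_mul_of_nonneg_left scx hη.le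
    have scy' := mul_le_mul_of_nonneg_left scy hη.le
    have sd := hsaddle h1 (hxh t) h2 (hyh t)
    have sd' : 0 ≤ (1/L) * (Fn h1 ystar - Fn xstar h2) :=
      mul_nonneg hη.le (by linarith [sd.1, sd.2])
    -- nonnegativity facts needed to drop leftover terms
    have nn1 : (0:ℝ) ≤ 1/L * (μ/2) * ‖n1 - h1‖ ^ 2 := by positivity
    have nn2 : (0:ℝ) ≤ 1/L * (μ/2) * ‖n2 - h2‖ ^ 2 := by positivity
    -- norm reversals
    have r1 : ‖xstar - n1‖ ^ 2 = ‖n1 - xstar‖ ^ 2 := by rw [norm_sub_rev]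
    have r2 : ‖ystar - n2‖ ^ 2 = ‖n2 - ystar‖ ^ 2 := by rw [norm_sub_rev]
    have r3 : ‖xstar - a1‖ ^ 2 = ‖a1 - xstar‖ ^ 2 := by rw [norm_sub_rev]
    have r4 : ‖ystar - a2‖ ^ 2 = ‖a2 - ystar‖ ^ 2 := by rw [norm_sub_rev]
    have r5 : ‖h1 - n1‖ ^ 2 = ‖n1 - h1‖ ^ 2 := by rw [norm_sub_rev]
    have r6 : ‖h2 - n2‖ ^ 2 = ‖n2 - h2‖ ^ 2 := by rw [norm_sub_rev]
    rw [r1, r3] at Bx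
    rw [r2, r4] at By
    rw [r5, r6] at cs
    ring_nf at Bx By Ax Ay cs scx' scy' sd' nn1 nn2 ⊢
    linarith [Bx, By, Ax, Ay, cs, scx', scy', sd', nn1, nn2]
  -- iterate
  have hc : (0:ℝ) < 1 + μ / L := by positivity
  have hstep' : ∀ t : ℕ, ‖x (t+1) - xstar‖ ^ 2 + ‖y (t+1) - ystar‖ ^ 2
      ≤ (1 + μ / L)⁻¹ * (‖x t - xstar‖ ^ 2 + ‖y t - ystar‖ ^ 2) := by
    intro t
    rw [← div_eq_inv_mul, le_div_iff₀ hc]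
    linarith [step t]
  have main : ∀ T : ℕ, ‖x T - xstar‖ ^ 2 + ‖y T - ystar‖ ^ 2
      ≤ ((1 + μ / L) ^ T)⁻¹ * (‖x 0 - xstar‖ ^ 2 + ‖y 0 - ystar‖ ^ 2) := by
    intro T
    induction T with
    | zero => simp
    | succ t ih =>
      calc ‖x (t+1) - xstar‖ ^ 2 + ‖y (t+1) - ystar‖ ^ 2
          ≤ (1 + μ / L)⁻¹ * (‖x t - xstar‖ ^ 2 + ‖y t - ystar‖ ^ 2) := hstep' t
        _ ≤ (1 + μ / L)⁻¹ * (((1 + μ / L) ^ t)⁻¹ * (‖x 0 - xstar‖ ^ 2 + ‖y 0 - ystar‖ ^ 2)) :=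
            mul_le_mul_of_nonneg_left ih (inv_nonneg.mpr hc.le)
        _ = ((1 + μ / L) ^ (t+1))⁻¹ * (‖x 0 - xstar‖ ^ 2 + ‖y 0 - ystar‖ ^ 2) := by
            rw [pow_succ (1 + μ / L) t, mul_inv_rev]; ring
  intro T _
  exact main T
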